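/- In the Set Cover fitness graph, let X ⊆ V be any configuration that covers V₂, i.e., every e ∈ V₂ belongs to some A ∈ X∩V₁. Then the probability that the Heterogeneous Moran process started at X ever reaches a configuration X* with V₂ ∪ (X∩V₁) ⊆ X* is at least ((x/n)/((x/n)+n))^{|V₂|}. -/
import Mathlib


open Finset
open scoped Classical

/-- A fitness graph: a finite strongly connected weighted directed graph together with
mutant and resident fitness functions. `w u v > 0` encodes that `(u,v)` is an edge
of non-zero weight; `w u ·` is a probability distribution. -/
structure FitnessGraph (V : Type) [Fintype V] [DecidableEq V] where
  w : V → V → ℝ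
  m : V → ℝ
  r : V → ℝ
  w_nonneg : ∀ u v, 0 ≤ w u v
  w_rowsum : ∀ u, ∑ v, w u v = 1
  strongly_connected : ∀ u v : V, Relation.ReflTransGen (fun a b => 0 < w a b) u v
  m_pos : ∀ u, 0 < m u
  r_pos : ∀ u, 0 < r u

variable {V : Type} [Fintype V] [DecidableEq V]

/-- A fitness graph is mutant-biased if `m(u) ≥ r(u)` for every node `u`. -/
def FitnessGraph.MutantBiased (G : FitnessGraph V) : Prop :=
  ∀ u, G.r u ≤ G.m u

/-- The (out-)degree of a node: the number of neighbors along edges of non-zero weight. -/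
noncomputable def FitnessGraph.deg (G : FitnessGraph V) (u : V) : ℕ :=
  (Finset.univ.filter fun v => 0 < G.w u v).card

/-- A fitness graph is undirected if its edge relation is symmetric and the weights
are uniform: `w(u,v) = 1/d(u)` for every edge `(u,v)`. -/
def FitnessGraph.Undirected (G : FitnessGraph V) : Prop :=
  (∀ u v, 0 < G.w u v → 0 < G.w v u) ∧
  ∀ u v, 0 < G.w u v → G.w u v = 1 / (G.deg u : ℝ)

/-- The fitness of node `u` in configuration `X`: `m(u)` if `u` is a mutant, `r(u)` otherwise. -/
def FitnessGraph.fit (G : FitnessGraph V) (X : Finset V) (u : V) : ℝ :=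
  if u ∈ X then G.m u else G.r u

/-- Total population fitness in configuration `X`. -/
def FitnessGraph.totalFit (G : FitnessGraph V) (X : Finset V) : ℝ :=
  ∑ u, G.fit X u

/-- The configuration resulting from `X` when `u` reproduces and replaces `v`. -/
def moranNext (X : Finset V) (u v : V) : Finset V :=
  if u ∈ X then insert v X else X.erase v

/-- One-step transition probability of the Heterogeneous Moran process. -/
noncomputable def FitnessGraph.step (G : FitnessGraph V) (X Y : Finset V) : ℝ :=
  ∑ u, ∑ v, (G.fit X u / G.totalFit X) * G.w u v * (if moranNext X u v = Y then 1 else 0)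

/-- `t`-step transition probability of the Heterogeneous Moran process. -/
noncomputable def FitnessGraph.stepN (G : FitnessGraph V) : ℕ → Finset V → Finset V → ℝ
  | 0, X, Y => if X = Y then 1 else 0
  | t + 1, X, Y => ∑ Z, FitnessGraph.stepN G t X Z * G.step Z Y

/-- Fixation probability: the probability that, started from seed set `S`, the process
eventually reaches the all-mutant configuration `V`; since `V` is absorbing this equals
`⨆ t, P(X_t = V)`. -/
noncomputable def FitnessGraph.fp (G : FitnessGraph V) (S : Finset V) : ℝ :=
  ⨆ t : ℕ, G.stepN t S Finset.univ

/-- One-step transition probability of the Moran process stopped upon reaching the set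
of configurations `A` (configurations in `A` are made absorbing). -/
noncomputable def stopStep (G : FitnessGraph V) (A : Set (Finset V)) (X Y : Finset V) : ℝ :=
  if X ∈ A then (if Y = X then 1 else 0) else G.step X Y

/-- `t`-step transition probability of the stopped process. -/
noncomputable def stopStepN (G : FitnessGraph V) (A : Set (Finset V)) :
    ℕ → Finset V → Finset V → ℝ
  | 0, X, Y => if X = Y then 1 else 0
  | t + 1, X, Y => ∑ Z, stopStepN G A t X Z * stopStep G A Z Y

/-- The probability that the Heterogeneous Moran process started at `X0` ever reaches a
configuration in `A`: the supremum over `t` of the probability that the process stopped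
at `A` is in `A` at time `t`. -/
noncomputable def reachProb (G : FitnessGraph V) (A : Set (Finset V)) (X0 : Finset V) : ℝ :=
  ⨆ t : ℕ, ∑ Y ∈ Finset.univ.filter (fun Y => Y ∈ A), stopStepN G A t X0 Y

/-- The Set Cover fitness graph for an instance `(U, 𝒮)` with parameters `x ≥ 1` and
`0 < y ≤ 1`: the vertex set is `V₁ ⊔ V₂` with `V₁ = 𝒮`, `V₂ = U`; there is an edge from
`A ∈ V₁` to each `e ∈ A` and all edges from `V₂` to `V₁`, with uniform weights;
residents have fitness `1` everywhere, mutants have fitness `x` on `V₁` and `y` on `V₂`. -/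
def IsSetCoverGraph {U : Type} [Fintype U] [DecidableEq U] (𝒮 : Finset (Finset U))
    (x y : ℝ) (G : FitnessGraph ({A // A ∈ 𝒮} ⊕ U)) : Prop :=
  (∀ (A : {A // A ∈ 𝒮}) (e : U),
      G.w (Sum.inl A) (Sum.inr e) = if e ∈ A.1 then 1 / (A.1.card : ℝ) else 0) ∧
  (∀ A B : {A // A ∈ 𝒮}, G.w (Sum.inl A) (Sum.inl B) = 0) ∧
  (∀ (e : U) (A : {A // A ∈ 𝒮}), G.w (Sum.inr e) (Sum.inl A) = 1 / (𝒮.card : ℝ)) ∧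
  (∀ e e' : U, G.w (Sum.inr e) (Sum.inr e') = 0) ∧
  (∀ A : {A // A ∈ 𝒮}, G.m (Sum.inl A) = x) ∧
  (∀ e : U, G.m (Sum.inr e) = y) ∧
  (∀ u : {A // A ∈ 𝒮} ⊕ U, G.r u = 1)


section GeneralLemmas

variable {V : Type} [Fintype V] [DecidableEq V]

lemma fit_pos (G : FitnessGraph V) (X : Finset V) (u : V) : 0 < G.fit X u := by
  unfold FitnessGraph.fit
  split
  · exact G.m_pos u
  · exact G.r_pos u

lemma totalFit_pos [Nonempty V] (G : FitnessGraph V) (X : Finset V) : 0 < G.totalFit X :=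
  Finset.sum_pos (fun u _ => fit_pos G X u) Finset.univ_nonempty

lemma coef_nonneg (G : FitnessGraph V) (X : Finset V) (u v : V) :
    0 ≤ G.fit X u / G.totalFit X * G.w u v := by
  apply mul_nonneg _ (G.w_nonneg u v)
  apply div_nonneg (fit_pos G X u).le
  exact Finset.sum_nonneg fun u _ => (fit_pos G X u).le

lemma step_nonneg (G : FitnessGraph V) (X Y : Finset V) : 0 ≤ G.step X Y := by
  unfold FitnessGraph.step
  refine Finset.sum_nonneg fun u _ => Finset.sum_nonneg fun v _ => ?_
  refine mul_nonneg (coef_nonneg G X u v) ?_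
  split <;> norm_num

lemma step_sum_mul (G : FitnessGraph V) (X : Finset V) (φ : Finset V → ℝ) :
    ∑ Z, G.step X Z * φ Z
      = ∑ u, ∑ v, (G.fit X u / G.totalFit X) * G.w u v * φ (moranNext X u v) := by
  unfold FitnessGraph.step
  simp only [Finset.sum_mul]
  rw [Finset.sum_comm]
  refine Finset.sum_congr rfl fun u _ => ?_
  rw [Finset.sum_comm]
  refine Finset.sum_congr rfl fun v _ => ?_
  simp only [mul_ite, mul_one, mul_zero, ite_mul, zero_mul]
  rw [Finset.sum_ite_eq Finset.univ (moranNext X u v)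
    (fun Z => G.fit X u / G.totalFit X * G.w u v * φ Z)]
  simp

lemma step_rowsum [Nonempty V] (G : FitnessGraph V) (X : Finset V) :
    ∑ Z, G.step X Z = 1 := by
  have h := step_sum_mul G X (fun _ => 1)
  simp only [mul_one] at h
  rw [h]
  have h2 : ∀ u ∈ Finset.univ (α := V),
      ∑ v, G.fit X u / G.totalFit X * G.w u v = G.fit X u / G.totalFit X := by
    intro u _
    rw [← Finset.mul_sum, G.w_rowsum, mul_one]
  rw [Finset.sum_congr rfl h2, ← Finset.sum_div]
  exact div_self (totalFit_pos G X).ne'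

lemma stopStep_nonneg (G : FitnessGraph V) (A : Set (Finset V)) (X Y : Finset V) :
    0 ≤ stopStep G A X Y := by
  unfold stopStep
  split
  · split <;> norm_num
  · exact step_nonneg G X Y

lemma stopStep_rowsum [Nonempty V] (G : FitnessGraph V) (A : Set (Finset V)) (X : Finset V) :
    ∑ Y, stopStep G A X Y = 1 := by
  unfold stopStep
  split
  · simp
  · exact step_rowsum G X

lemma stopStepN_nonneg (G : FitnessGraph V) (A : Set (Finset V)) (t : ℕ) (X Y : Finset V) :
    0 ≤ stopStepN G A t X Y := by
  induction t generalizing X Y with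
  | zero => unfold stopStepN; split <;> norm_num
  | succ t ih =>
    unfold stopStepN
    exact Finset.sum_nonneg fun Z _ => mul_nonneg (ih X Z) (stopStep_nonneg G A Z Y)

lemma stopStepN_rowsum [Nonempty V] (G : FitnessGraph V) (A : Set (Finset V)) (t : ℕ)
    (X : Finset V) : ∑ Y, stopStepN G A t X Y = 1 := by
  induction t generalizing X with
  | zero => simp [stopStepN]
  | succ t ih =>
    unfold stopStepN
    rw [Finset.sum_comm]
    calc ∑ Z, ∑ Y, stopStepN G A t X Z * stopStep G A Z Y
        = ∑ Z, stopStepN G A t X Z * ∑ Y, stopStep G A Z Y := by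
          refine Finset.sum_congr rfl fun Z _ => ?_; rw [Finset.mul_sum]
      _ = ∑ Z, stopStepN G A t X Z := by
          refine Finset.sum_congr rfl fun Z _ => ?_
          rw [stopStep_rowsum G A Z, mul_one]
      _ = 1 := ih X

lemma stopStepN_add (G : FitnessGraph V) (A : Set (Finset V)) (s t : ℕ) (X Y : Finset V) :
    stopStepN G A (s + t) X Y = ∑ Z, stopStepN G A s X Z * stopStepN G A t Z Y := by
  induction t generalizing Y with
  | zero =>
    simp only [Nat.add_zero, stopStepN]
    rw [Finset.sum_congr rfl (fun Z _ => by rw [mul_ite, mul_one, mul_zero])]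
    rw [Finset.sum_ite_eq' Finset.univ Y (stopStepN G A s X)]
    simp
  | succ t ih =>
    calc stopStepN G A (s + (t + 1)) X Y
        = ∑ W, stopStepN G A (s + t) X W * stopStep G A W Y := rfl
      _ = ∑ W, (∑ Z, stopStepN G A s X Z * stopStepN G A t Z W) * stopStep G A W Y := by
          refine Finset.sum_congr rfl fun W _ => ?_; rw [ih W]
      _ = ∑ W, ∑ Z, stopStepN G A s X Z * stopStepN G A t Z W * stopStep G A W Y := by
          refine Finset.sum_congr rfl fun W _ => ?_; rw [Finset.sum_mul]
      _ = ∑ Z, ∑ W, stopStepN G A s X Z * stopStepN G A t Z W * stopStep G A W Y :=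
          Finset.sum_comm
      _ = ∑ Z, stopStepN G A s X Z * ∑ W, stopStepN G A t Z W * stopStep G A W Y := by
          refine Finset.sum_congr rfl fun Z _ => ?_
          rw [Finset.mul_sum]
          refine Finset.sum_congr rfl fun W _ => ?_
          ring
      _ = ∑ Z, stopStepN G A s X Z * stopStepN G A (t + 1) Z Y := rfl

lemma stopStepN_one (G : FitnessGraph V) (A : Set (Finset V)) (X Y : Finset V) :
    stopStepN G A 1 X Y = stopStep G A X Y := by
  show (∑ Z, stopStepN G A 0 X Z * stopStep G A Z Y) = _
  unfold stopStepN
  rw [Finset.sum_congr rfl (fun Z _ => by rw [ite_mul, one_mul, zero_mul])]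
  rw [Finset.sum_ite_eq Finset.univ X (fun Z => stopStep G A Z Y)]
  simp

lemma stopStepN_front (G : FitnessGraph V) (A : Set (Finset V)) (t : ℕ) (X Y : Finset V) :
    stopStepN G A (1 + t) X Y = ∑ Z, stopStep G A X Z * stopStepN G A t Z Y := by
  rw [stopStepN_add]
  exact Finset.sum_congr rfl fun Z _ => by rw [stopStepN_one]

/-- mass absorbed in `A` at time `t`. -/
noncomputable def absMass (G : FitnessGraph V) (A : Set (Finset V)) (t : ℕ) (X : Finset V) : ℝ :=
  ∑ Y ∈ Finset.univ.filter (fun Y => Y ∈ A), stopStepN G A t X Y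

lemma reachProb_eq (G : FitnessGraph V) (A : Set (Finset V)) (X : Finset V) :
    reachProb G A X = ⨆ t : ℕ, absMass G A t X := rfl

lemma absMass_nonneg (G : FitnessGraph V) (A : Set (Finset V)) (t : ℕ) (X : Finset V) :
    0 ≤ absMass G A t X :=
  Finset.sum_nonneg fun Y _ => stopStepN_nonneg G A t X Y

lemma absMass_le_one [Nonempty V] (G : FitnessGraph V) (A : Set (Finset V)) (t : ℕ)
    (X : Finset V) : absMass G A t X ≤ 1 := by
  rw [← stopStepN_rowsum G A t X]
  exact Finset.sum_le_sum_of_subset_of_nonneg (Finset.filter_subset _ _)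
    (fun Y _ _ => stopStepN_nonneg G A t X Y)

lemma absMass_front (G : FitnessGraph V) (A : Set (Finset V)) (t : ℕ) (X : Finset V) :
    absMass G A (1 + t) X = ∑ Z, stopStep G A X Z * absMass G A t Z := by
  unfold absMass
  calc ∑ Y ∈ Finset.univ.filter (fun Y => Y ∈ A), stopStepN G A (1 + t) X Y
      = ∑ Y ∈ Finset.univ.filter (fun Y => Y ∈ A), ∑ Z, stopStep G A X Z * stopStepN G A t Z Y := by
        refine Finset.sum_congr rfl fun Y _ => stopStepN_front G A t X Y
    _ = ∑ Z, ∑ Y ∈ Finset.univ.filter (fun Y => Y ∈ A), stopStep G A X Z * stopStepN G A t Z Y :=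
        Finset.sum_comm
    _ = ∑ Z, stopStep G A X Z * ∑ Y ∈ Finset.univ.filter (fun Y => Y ∈ A), stopStepN G A t Z Y := by
        refine Finset.sum_congr rfl fun Z _ => (Finset.mul_sum _ _ _).symm

lemma absMass_add (G : FitnessGraph V) (A : Set (Finset V)) (t s : ℕ) (X : Finset V) :
    absMass G A (t + s) X = ∑ Z, stopStepN G A t X Z * absMass G A s Z := by
  unfold absMass
  calc ∑ Y ∈ Finset.univ.filter (fun Y => Y ∈ A), stopStepN G A (t + s) X Y
      = ∑ Y ∈ Finset.univ.filter (fun Y => Y ∈ A), ∑ Z, stopStepN G A t X Z * stopStepN G A s Z Y := by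
        refine Finset.sum_congr rfl fun Y _ => stopStepN_add G A t s X Y
    _ = ∑ Z, ∑ Y ∈ Finset.univ.filter (fun Y => Y ∈ A), stopStepN G A t X Z * stopStepN G A s Z Y :=
        Finset.sum_comm
    _ = ∑ Z, stopStepN G A t X Z * ∑ Y ∈ Finset.univ.filter (fun Y => Y ∈ A), stopStepN G A s Z Y := by
        refine Finset.sum_congr rfl fun Z _ => (Finset.mul_sum _ _ _).symm

lemma absMass_of_mem (G : FitnessGraph V) (A : Set (Finset V)) (t : ℕ) {Y : Finset V}
    (hY : Y ∈ A) : absMass G A t Y = 1 := by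
  induction t with
  | zero =>
    unfold absMass stopStepN
    rw [Finset.sum_congr rfl (fun W _ => rfl)]
    rw [Finset.sum_ite_eq (Finset.univ.filter (fun Z => Z ∈ A)) Y (fun _ => (1:ℝ))]
    simp [hY]
  | succ t ih =>
    have : t + 1 = 1 + t := by omega
    rw [this, absMass_front]
    have hstop : ∀ Z, stopStep G A Y Z = if Z = Y then 1 else 0 := by
      intro Z; unfold stopStep; rw [if_pos hY]
    calc ∑ Z, stopStep G A Y Z * absMass G A t Z
        = ∑ Z, (if Z = Y then 1 else 0) * absMass G A t Z := by
          refine Finset.sum_congr rfl fun Z _ => by rw [hstop Z]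
      _ = absMass G A t Y := by
          rw [Finset.sum_congr rfl (fun Z _ => by rw [ite_mul, one_mul, zero_mul])]
          rw [Finset.sum_ite_eq' Finset.univ Y (absMass G A t)]
          simp
      _ = 1 := ih

lemma absMass_mono [Nonempty V] (G : FitnessGraph V) (A : Set (Finset V)) (X : Finset V) :
    Monotone (fun t => absMass G A t X) := by
  refine monotone_nat_of_le_succ fun t => ?_
  have : t + 1 = 1 + t := by omega
  show absMass G A t X ≤ absMass G A (t+1) X
  rw [absMass_add G A t 1 X]
  have h1 : absMass G A t X
      = ∑ Z ∈ Finset.univ.filter (fun Z => Z ∈ A), stopStepN G A t X Z * absMass G A 1 Z :=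
    Finset.sum_congr rfl fun Z hZ => by
      rw [absMass_of_mem G A 1 (Finset.mem_filter.mp hZ).2, mul_one]
  rw [h1]
  exact Finset.sum_le_sum_of_subset_of_nonneg (Finset.filter_subset _ _)
    (fun Z _ _ => mul_nonneg (stopStepN_nonneg G A t X Z) (absMass_nonneg G A 1 Z))

lemma bddAbove_absMass [Nonempty V] (G : FitnessGraph V) (A : Set (Finset V)) (X : Finset V) :
    BddAbove (Set.range fun t => absMass G A t X) := by
  refine ⟨1, ?_⟩
  rintro r ⟨t, rfl⟩
  exact absMass_le_one G A t X

lemma absMass_le_reachProb [Nonempty V] (G : FitnessGraph V) (A : Set (Finset V)) (t : ℕ)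
    (X : Finset V) : absMass G A t X ≤ reachProb G A X := by
  rw [reachProb_eq]
  exact le_ciSup (bddAbove_absMass G A X) t

lemma reachProb_nonneg [Nonempty V] (G : FitnessGraph V) (A : Set (Finset V)) (X : Finset V) :
    0 ≤ reachProb G A X :=
  le_trans (absMass_nonneg G A 0 X) (absMass_le_reachProb G A 0 X)

lemma reachProb_le_one [Nonempty V] (G : FitnessGraph V) (A : Set (Finset V)) (X : Finset V) :
    reachProb G A X ≤ 1 := by
  rw [reachProb_eq]
  exact ciSup_le fun t => absMass_le_one G A t X

lemma reachProb_of_mem [Nonempty V] (G : FitnessGraph V) (A : Set (Finset V)) {Y : Finset V}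
    (hY : Y ∈ A) : reachProb G A Y = 1 := by
  refine le_antisymm (reachProb_le_one G A Y) ?_
  rw [← absMass_of_mem G A 0 hY]
  exact absMass_le_reachProb G A 0 Y

lemma tendsto_absMass [Nonempty V] (G : FitnessGraph V) (A : Set (Finset V)) (X : Finset V) :
    Filter.Tendsto (fun t => absMass G A t X) Filter.atTop (nhds (reachProb G A X)) := by
  rw [reachProb_eq]
  exact tendsto_atTop_ciSup (absMass_mono G A X) (bddAbove_absMass G A X)

/-- `reachProb` is superharmonic for the stopped chain at every horizon. -/
lemma reachProb_superharmonic [Nonempty V] (G : FitnessGraph V) (A : Set (Finset V)) (t : ℕ)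
    (X : Finset V) :
    ∑ Z, stopStepN G A t X Z * reachProb G A Z ≤ reachProb G A X := by
  have h2 : Filter.Tendsto (fun s => ∑ Z, stopStepN G A t X Z * absMass G A s Z)
      Filter.atTop (nhds (∑ Z, stopStepN G A t X Z * reachProb G A Z)) := by
    refine tendsto_finset_sum _ fun Z _ => ?_
    exact Filter.Tendsto.const_mul _ (tendsto_absMass G A Z)
  refine le_of_tendsto h2 (Filter.Eventually.of_forall fun s => ?_)
  rw [← absMass_add G A t s X]
  exact absMass_le_reachProb G A (t + s) X

/-- Iterating a subharmonic function along the stopped chain. -/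
lemma subharmonic_iter (G : FitnessGraph V) (A : Set (Finset V)) (φ : Finset V → ℝ)
    (h1 : ∀ Y, φ Y ≤ ∑ Z, stopStep G A Y Z * φ Z) (t : ℕ) (Y : Finset V) :
    φ Y ≤ ∑ Z, stopStepN G A t Y Z * φ Z := by
  induction t generalizing Y with
  | zero =>
    unfold stopStepN
    rw [Finset.sum_congr rfl (fun Z (_ : Z ∈ Finset.univ) => by rw [ite_mul, one_mul, zero_mul])]
    rw [Finset.sum_ite_eq Finset.univ Y φ]
    simp
  | succ t ih =>
    have e1 : t + 1 = 1 + t := by omega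
    rw [e1]
    calc φ Y ≤ ∑ W, stopStep G A Y W * φ W := h1 Y
      _ ≤ ∑ W, stopStep G A Y W * (∑ Z, stopStepN G A t W Z * φ Z) := by
          refine Finset.sum_le_sum fun W _ => ?_
          exact mul_le_mul_of_nonneg_left (ih W) (stopStep_nonneg G A Y W)
      _ = ∑ Z, stopStepN G A (1 + t) Y Z * φ Z := by
          symm
          rw [Finset.sum_congr rfl (fun Z (_ : Z ∈ Finset.univ) =>
            by rw [stopStepN_front G A t Y Z, Finset.sum_mul])]
          rw [Finset.sum_comm]
          refine Finset.sum_congr rfl fun W _ => ?_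
          rw [Finset.mul_sum]
          refine Finset.sum_congr rfl fun Z _ => ?_
          ring

end GeneralLemmas


section SetCoverAux

variable {U : Type} [Fintype U] [DecidableEq U]

/-- number of elements of `U` missing from configuration `Y`. -/
noncomputable def scMiss (𝒮 : Finset (Finset U)) (Y : Finset ({A // A ∈ 𝒮} ⊕ U)) : ℕ :=
  (Finset.univ.filter fun e : U => Sum.inr e ∉ Y).card

lemma scMiss_le_card (𝒮 : Finset (Finset U)) (Y : Finset ({A // A ∈ 𝒮} ⊕ U)) :
    scMiss 𝒮 Y ≤ Fintype.card U :=
  le_trans (Finset.card_filter_le _ _) (le_of_eq (Finset.card_univ))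

lemma scMiss_insert_le (𝒮 : Finset (Finset U)) (Y : Finset ({A // A ∈ 𝒮} ⊕ U)) (v) :
    scMiss 𝒮 (insert v Y) ≤ scMiss 𝒮 Y := by
  apply Finset.card_le_card
  intro e he
  simp only [Finset.mem_filter, Finset.mem_insert] at he ⊢
  exact ⟨he.1, fun h => he.2 (Or.inr h)⟩

lemma scMiss_pos (𝒮 : Finset (Finset U)) (Y : Finset ({A // A ∈ 𝒮} ⊕ U)) (e₀ : U)
    (he₀ : Sum.inr e₀ ∉ Y) : 1 ≤ scMiss 𝒮 Y := by
  rw [Nat.succ_le_iff]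
  unfold scMiss
  rw [Finset.card_pos]
  exact ⟨e₀, Finset.mem_filter.mpr ⟨Finset.mem_univ _, he₀⟩⟩

lemma scMiss_insert_lt (𝒮 : Finset (Finset U)) (Y : Finset ({A // A ∈ 𝒮} ⊕ U)) (e₀ : U)
    (he₀ : Sum.inr e₀ ∉ Y) :
    scMiss 𝒮 (insert (Sum.inr e₀) Y) ≤ scMiss 𝒮 Y - 1 := by
  have hsub : (Finset.univ.filter fun e : U => Sum.inr e ∉ insert (Sum.inr e₀) Y)
      ⊆ (Finset.univ.filter fun e : U => Sum.inr e ∉ Y).erase e₀ := by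
    intro e he
    simp only [Finset.mem_filter, Finset.mem_insert, Finset.mem_erase] at he ⊢
    refine ⟨fun h => he.2 (Or.inl (by rw [h])), he.1, fun h => he.2 (Or.inr h)⟩
  calc scMiss 𝒮 (insert (Sum.inr e₀) Y)
      ≤ ((Finset.univ.filter fun e : U => Sum.inr e ∉ Y).erase e₀).card :=
        Finset.card_le_card hsub
    _ = scMiss 𝒮 Y - 1 :=
        Finset.card_erase_of_mem (Finset.mem_filter.mpr ⟨Finset.mem_univ _, he₀⟩)

lemma scMiss_erase_le (𝒮 : Finset (Finset U)) (Y : Finset ({A // A ∈ 𝒮} ⊕ U)) (v) :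
    scMiss 𝒮 (Y.erase v) ≤ scMiss 𝒮 Y + 1 := by
  have hsub : (Finset.univ.filter fun e : U => Sum.inr e ∉ Y.erase v)
      ⊆ (Finset.univ.filter fun e : U => Sum.inr e ∉ Y)
        ∪ (Finset.univ.filter fun e : U => (Sum.inr e : {A // A ∈ 𝒮} ⊕ U) = v) := by
    intro e he
    simp only [Finset.mem_filter, Finset.mem_erase, Finset.mem_union] at he ⊢
    rcases Classical.em ((Sum.inr e : {A // A ∈ 𝒮} ⊕ U) = v) with h | h
    · exact Or.inr ⟨Finset.mem_univ _, h⟩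
    · exact Or.inl ⟨Finset.mem_univ _, fun hY => he.2 ⟨h, hY⟩⟩
  have hone : (Finset.univ.filter fun e : U => (Sum.inr e : {A // A ∈ 𝒮} ⊕ U) = v).card ≤ 1 := by
    apply Finset.card_le_one.mpr
    intro a ha b hb
    simp only [Finset.mem_filter] at ha hb
    exact Sum.inr_injective (ha.2.trans hb.2.symm)
  calc scMiss 𝒮 (Y.erase v) ≤ _ := Finset.card_le_card hsub
    _ ≤ _ + _ := Finset.card_union_le _ _
    _ ≤ scMiss 𝒮 Y + 1 := by
        unfold scMiss; omega

/-- the potential function used in the race argument. -/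
noncomputable def scPhi (𝒮 : Finset (Finset U)) (c : ℝ) (N Y : Finset ({A // A ∈ 𝒮} ⊕ U)) : ℝ :=
  if N ⊆ Y then c ^ scMiss 𝒮 Y else 0

lemma scPhi_nonneg (𝒮 : Finset (Finset U)) {c : ℝ} (hc0 : 0 ≤ c) (N Y) :
    0 ≤ scPhi 𝒮 c N Y := by
  unfold scPhi; split
  · exact pow_nonneg hc0 _
  · exact le_refl 0

lemma scPhi_le_one (𝒮 : Finset (Finset U)) {c : ℝ} (hc0 : 0 ≤ c) (hc1 : c ≤ 1) (N Y) :
    scPhi 𝒮 c N Y ≤ 1 := by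
  unfold scPhi; split
  · exact pow_le_one₀ hc0 hc1
  · norm_num

end SetCoverAux


section SetCoverMain

variable {U : Type} [Fintype U] [DecidableEq U]

lemma sc_fit_le (𝒮 : Finset (Finset U)) (x y : ℝ) (hx : 1 ≤ x) (hy1 : y ≤ 1)
    (G : FitnessGraph ({A // A ∈ 𝒮} ⊕ U)) (hG : IsSetCoverGraph 𝒮 x y G)
    (Y : Finset ({A // A ∈ 𝒮} ⊕ U)) (u : {A // A ∈ 𝒮} ⊕ U) : G.fit Y u ≤ x := by
  obtain ⟨-, -, -, -, hml, hmr, hr⟩ := hG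
  unfold FitnessGraph.fit
  split
  · cases u with
    | inl A => rw [hml]
    | inr e => rw [hmr]; linarith
  · rw [hr]; exact hx

lemma sc_fit_res (𝒮 : Finset (Finset U)) (x y : ℝ)
    (G : FitnessGraph ({A // A ∈ 𝒮} ⊕ U)) (hG : IsSetCoverGraph 𝒮 x y G)
    (Y : Finset ({A // A ∈ 𝒮} ⊕ U)) (u : {A // A ∈ 𝒮} ⊕ U) (hu : u ∉ Y) : G.fit Y u = 1 := by
  unfold FitnessGraph.fit
  rw [if_neg hu, hG.2.2.2.2.2.2 u]

lemma sc_totalFit_le [Nonempty U] (𝒮 : Finset (Finset U)) (x y : ℝ) (hx : 1 ≤ x) (hy1 : y ≤ 1)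
    (G : FitnessGraph ({A // A ∈ 𝒮} ⊕ U)) (hG : IsSetCoverGraph 𝒮 x y G)
    (Y : Finset ({A // A ∈ 𝒮} ⊕ U)) :
    G.totalFit Y ≤ (Fintype.card ({A // A ∈ 𝒮} ⊕ U) : ℝ) * x := by
  unfold FitnessGraph.totalFit
  calc ∑ u, G.fit Y u ≤ ∑ _u : ({A // A ∈ 𝒮} ⊕ U), x :=
        Finset.sum_le_sum fun u _ => sc_fit_le 𝒮 x y hx hy1 G hG Y u
    _ = (Fintype.card ({A // A ∈ 𝒮} ⊕ U) : ℝ) * x := by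
        rw [Finset.sum_const, Finset.card_univ, nsmul_eq_mul]

lemma sc_card_le [Nonempty U] (𝒮 : Finset (Finset U)) (A₀ : {A // A ∈ 𝒮}) :
    (A₀.1.card : ℝ) ≤ (Fintype.card ({A // A ∈ 𝒮} ⊕ U) : ℝ) := by
  have h1 : A₀.1.card ≤ Fintype.card U := by
    calc A₀.1.card ≤ Finset.univ.card := Finset.card_le_card (Finset.subset_univ _)
      _ = Fintype.card U := Finset.card_univ
  have h2 : Fintype.card U ≤ Fintype.card ({A // A ∈ 𝒮} ⊕ U) := by
    rw [Fintype.card_sum]; omega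
  exact_mod_cast le_trans h1 h2

lemma sc_n_pos [Nonempty U] (𝒮 : Finset (Finset U)) :
    (0 : ℝ) < (Fintype.card ({A // A ∈ 𝒮} ⊕ U) : ℝ) := by
  have : 0 < Fintype.card ({A // A ∈ 𝒮} ⊕ U) := by
    rw [Fintype.card_sum]
    have := Fintype.card_pos (α := U)
    omega
  exact_mod_cast this

/-- the good pair has a large transition coefficient -/
lemma sc_good_coef [Nonempty U] (𝒮 : Finset (Finset U)) (x y : ℝ) (hx : 1 ≤ x) (hy1 : y ≤ 1)
    (G : FitnessGraph ({A // A ∈ 𝒮} ⊕ U)) (hG : IsSetCoverGraph 𝒮 x y G)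
    (Y : Finset ({A // A ∈ 𝒮} ⊕ U)) (A₀ : {A // A ∈ 𝒮}) (e₀ : U)
    (hA₀Y : Sum.inl A₀ ∈ Y) (he₀A : e₀ ∈ A₀.1) :
    x / (G.totalFit Y * (Fintype.card ({A // A ∈ 𝒮} ⊕ U) : ℝ))
      ≤ G.fit Y (Sum.inl A₀) / G.totalFit Y * G.w (Sum.inl A₀) (Sum.inr e₀) := by
  have hV : Nonempty ({A // A ∈ 𝒮} ⊕ U) := ⟨Sum.inr (Classical.arbitrary U)⟩
  have hF0 : 0 < G.totalFit Y := totalFit_pos G Y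
  have hfit : G.fit Y (Sum.inl A₀) = x := by
    unfold FitnessGraph.fit
    rw [if_pos hA₀Y, hG.2.2.2.2.1]
  have hw : G.w (Sum.inl A₀) (Sum.inr e₀) = 1 / (A₀.1.card : ℝ) := by
    rw [hG.1, if_pos he₀A]
  rw [hfit, hw]
  have hcard0 : (0:ℝ) < (A₀.1.card : ℝ) := by
    have : 0 < A₀.1.card := Finset.card_pos.mpr ⟨e₀, he₀A⟩
    exact_mod_cast this
  have hcardn := sc_card_le (U := U) 𝒮 A₀
  have hn0 := sc_n_pos (U := U) 𝒮
  rw [div_mul_div_comm, mul_one]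
  gcongr

lemma sc_arith (c t F R S xn : ℝ)
    (hkey : c * (R * (1-c) + c * S) ≤ (1-c) * xn) (ht0 : 0 ≤ t) :
    (t*c) * F ≤ (F - R)*(t*c) + (t*c*c)*(R-S) + xn*(t - t*c) := by
  nlinarith [mul_le_mul_of_nonneg_left hkey ht0]

/-- The race inequality: one-step subharmonicity of the potential at covering,
not-yet-finished configurations. -/
lemma sc_race [Nonempty U] (𝒮 : Finset (Finset U)) (x y : ℝ) (hx : 1 ≤ x) (hy1 : y ≤ 1)
    (G : FitnessGraph ({A // A ∈ 𝒮} ⊕ U)) (hG : IsSetCoverGraph 𝒮 x y G)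
    (N Y : Finset ({A // A ∈ 𝒮} ⊕ U)) (hNY : N ⊆ Y)
    (A₀ : {A // A ∈ 𝒮}) (e₀ : U) (hA₀N : Sum.inl A₀ ∈ N) (he₀A : e₀ ∈ A₀.1)
    (he₀ : Sum.inr e₀ ∉ Y)
    (n c : ℝ) (hn : n = (Fintype.card ({A // A ∈ 𝒮} ⊕ U) : ℝ))
    (hc : c = x / n / (x / n + n)) :
    c ^ scMiss 𝒮 Y ≤ ∑ Z, G.step Y Z * scPhi 𝒮 c N Z := by
  classical
  have hV : Nonempty ({A // A ∈ 𝒮} ⊕ U) := ⟨Sum.inr (Classical.arbitrary U)⟩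
  have hn0 : (0:ℝ) < n := hn ▸ sc_n_pos (U := U) 𝒮
  have hx0 : (0:ℝ) < x := lt_of_lt_of_le one_pos hx
  have hxn : 0 < x / n := div_pos hx0 hn0
  have hc0 : 0 < c := by rw [hc]; positivity
  have hc1 : c < 1 := by
    rw [hc, div_lt_one (by positivity)]
    linarith
  have hnne : n ≠ 0 := hn0.ne'
  have hdenne : x / n + n ≠ 0 := by positivity
  have hid : (x/n) * (1 - c) = c * n := by
    rw [hc]
    field_simp
    ring
  have hF0 : 0 < G.totalFit Y := totalFit_pos G Y
  set k := scMiss 𝒮 Y with hkdef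
  have hk1 : 1 ≤ k := scMiss_pos 𝒮 Y e₀ he₀
  have hk' : k - 1 + 1 = k := by omega
  have hck : c ^ k = c ^ (k-1) * c := by
    conv_lhs => rw [← hk']
    rw [pow_succ]
  have hck1 : c ^ (k+1) = c ^ (k-1) * c * c := by rw [pow_succ, hck]
  have hA₀Y : Sum.inl A₀ ∈ Y := hNY hA₀N
  rw [step_sum_mul]
  set u₀ : {A // A ∈ 𝒮} ⊕ U := Sum.inl A₀ with hu₀
  set v₀ : {A // A ∈ 𝒮} ⊕ U := Sum.inr e₀ with hv₀
  -- pointwise lower bound for each reproduction event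
  have key1 : ∀ u v : ({A // A ∈ 𝒮} ⊕ U),
      G.fit Y u / G.totalFit Y * G.w u v * (if u ∈ Y then c^k else if v ∈ N then 0 else c^(k+1))
        + (if u = u₀ then (if v = v₀ then
            G.fit Y u / G.totalFit Y * G.w u v * (c^(k-1) - c^k) else 0) else 0)
      ≤ G.fit Y u / G.totalFit Y * G.w u v * scPhi 𝒮 c N (moranNext Y u v) := by
    intro u v
    have hco : 0 ≤ G.fit Y u / G.totalFit Y * G.w u v := coef_nonneg G Y u v
    by_cases hu : u ∈ Y
    · have hnext : moranNext Y u v = insert v Y := if_pos hu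
      have hsubN : N ⊆ insert v Y := hNY.trans (Finset.subset_insert v Y)
      have hphi : scPhi 𝒮 c N (insert v Y) = c ^ scMiss 𝒮 (insert v Y) := if_pos hsubN
      by_cases hgood : u = u₀ ∧ v = v₀
      · obtain ⟨rfl, rfl⟩ := hgood
        rw [hnext, hphi, if_pos rfl, if_pos rfl, if_pos hu]
        have hmiss : scMiss 𝒮 (insert v₀ Y) ≤ k - 1 := scMiss_insert_lt 𝒮 Y e₀ he₀
        have hpow : c^(k-1) ≤ c ^ scMiss 𝒮 (insert v₀ Y) :=
          pow_le_pow_of_le_one hc0.le hc1.le hmiss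
        have h5 := mul_le_mul_of_nonneg_left hpow hco
        calc G.fit Y u₀ / G.totalFit Y * G.w u₀ v₀ * c ^ k
              + G.fit Y u₀ / G.totalFit Y * G.w u₀ v₀ * (c^(k-1) - c^k)
            = G.fit Y u₀ / G.totalFit Y * G.w u₀ v₀ * c^(k-1) := by ring
          _ ≤ _ := h5
      · have h2 : (if u = u₀ then (if v = v₀ then
            G.fit Y u / G.totalFit Y * G.w u v * (c^(k-1) - c^k) else 0) else 0) = 0 := by
          by_cases h3 : u = u₀
          · rw [if_pos h3, if_neg (fun h4 => hgood ⟨h3, h4⟩)]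
          · rw [if_neg h3]
        rw [h2, add_zero, if_pos hu, hnext, hphi]
        exact mul_le_mul_of_nonneg_left
          (pow_le_pow_of_le_one hc0.le hc1.le (scMiss_insert_le 𝒮 Y v)) hco
    · have hnext : moranNext Y u v = Y.erase v := if_neg hu
      have hu0 : u ≠ u₀ := fun h => hu (h ▸ hA₀Y)
      rw [if_neg hu0, add_zero, if_neg hu, hnext]
      by_cases hv : v ∈ N
      · rw [if_pos hv, mul_zero]
        exact mul_nonneg hco (scPhi_nonneg 𝒮 hc0.le N _)
      · rw [if_neg hv]
        have hsub : N ⊆ Y.erase v := fun w hw =>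
          Finset.mem_erase.mpr ⟨fun hwv => hv (hwv ▸ hw), hNY hw⟩
        have hphi : scPhi 𝒮 c N (Y.erase v) = c ^ scMiss 𝒮 (Y.erase v) := if_pos hsub
        rw [hphi]
        exact mul_le_mul_of_nonneg_left
          (pow_le_pow_of_le_one hc0.le hc1.le (scMiss_erase_le 𝒮 Y v)) hco
  have step1 : ∑ u, ∑ v,
      (G.fit Y u / G.totalFit Y * G.w u v * (if u ∈ Y then c^k else if v ∈ N then 0 else c^(k+1))
        + (if u = u₀ then (if v = v₀ then
            G.fit Y u / G.totalFit Y * G.w u v * (c^(k-1) - c^k) else 0) else 0))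
      ≤ ∑ u, ∑ v, G.fit Y u / G.totalFit Y * G.w u v * scPhi 𝒮 c N (moranNext Y u v) :=
    Finset.sum_le_sum fun u _ => Finset.sum_le_sum fun v _ => key1 u v
  refine le_trans ?_ step1
  -- evaluate the lower bound sum
  simp only [Finset.sum_add_distrib]
  -- second piece: the good-event bonus
  have hT2a : ∀ u : ({A // A ∈ 𝒮} ⊕ U), ∑ v, (if u = u₀ then (if v = v₀ then
        G.fit Y u / G.totalFit Y * G.w u v * (c^(k-1) - c^k) else 0) else 0)
      = (if u = u₀ then G.fit Y u / G.totalFit Y * G.w u v₀ * (c^(k-1) - c^k) else 0) := by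
    intro u
    by_cases h3 : u = u₀
    · simp only [if_pos h3]
      rw [Finset.sum_ite_eq' Finset.univ v₀
        (fun v => G.fit Y u / G.totalFit Y * G.w u v * (c^(k-1) - c^k))]
      simp
    · simp [h3]
  have hT2 : ∑ u, ∑ v, (if u = u₀ then (if v = v₀ then
        G.fit Y u / G.totalFit Y * G.w u v * (c^(k-1) - c^k) else 0) else 0)
      = G.fit Y u₀ / G.totalFit Y * G.w u₀ v₀ * (c^(k-1) - c^k) := by
    rw [Finset.sum_congr rfl fun u _ => hT2a u]
    rw [Finset.sum_ite_eq' Finset.univ u₀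
      (fun u => G.fit Y u / G.totalFit Y * G.w u v₀ * (c^(k-1) - c^k))]
    simp
  rw [hT2]
  -- first piece
  have hT1 : ∀ u : ({A // A ∈ 𝒮} ⊕ U), ∑ v,
      G.fit Y u / G.totalFit Y * G.w u v * (if u ∈ Y then c^k else if v ∈ N then 0 else c^(k+1))
      = if u ∈ Y then G.fit Y u / G.totalFit Y * c^k
        else 1 / G.totalFit Y * (c^(k+1) * (1 - ∑ v ∈ N, G.w u v)) := by
    intro u
    by_cases hu : u ∈ Y
    · simp only [if_pos hu]
      rw [Finset.sum_congr rfl (fun v (_ : v ∈ Finset.univ) => by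
        rw [mul_assoc, mul_comm (G.w u v) (c^k), ← mul_assoc])]
      rw [← Finset.mul_sum, G.w_rowsum, mul_one]
    · simp only [if_neg hu]
      have hfit1 : G.fit Y u = 1 := sc_fit_res 𝒮 x y G hG Y u hu
      calc ∑ v, G.fit Y u / G.totalFit Y * G.w u v * (if v ∈ N then 0 else c^(k+1))
          = ∑ v, 1 / G.totalFit Y *
              (G.w u v * c^(k+1) - (if v ∈ N then G.w u v * c^(k+1) else 0)) := by
            refine Finset.sum_congr rfl fun v _ => ?_
            rw [hfit1]
            by_cases hv : v ∈ N
            · simp only [if_pos hv]; ring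
            · simp only [if_neg hv]; ring
        _ = 1 / G.totalFit Y * (c^(k+1) * (1 - ∑ v ∈ N, G.w u v)) := by
            rw [← Finset.mul_sum, Finset.sum_sub_distrib, Finset.sum_ite_mem,
              Finset.univ_inter, ← Finset.sum_mul, ← Finset.sum_mul, G.w_rowsum]
            ring
  rw [Finset.sum_congr rfl fun u _ => hT1 u]
  -- split the sum over mutants and residents
  have hfY : Finset.univ.filter (fun u : ({A // A ∈ 𝒮} ⊕ U) => u ∈ Y) = Y := by
    ext u; simp
  have hfYc : Finset.univ.filter (fun u : ({A // A ∈ 𝒮} ⊕ U) => ¬ u ∈ Y) = Yᶜ := by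
    ext u; simp
  rw [Finset.sum_ite, hfY, hfYc]
  set R := ((Yᶜ : Finset ({A // A ∈ 𝒮} ⊕ U)).card : ℝ) with hRdef
  set S := ∑ u ∈ (Yᶜ : Finset ({A // A ∈ 𝒮} ⊕ U)), ∑ v ∈ N, G.w u v with hSdef
  have hS0 : 0 ≤ S :=
    Finset.sum_nonneg fun u _ => Finset.sum_nonneg fun v _ => G.w_nonneg u v
  have hSR : S ≤ R := by
    rw [hSdef, hRdef]
    calc ∑ u ∈ (Yᶜ : Finset ({A // A ∈ 𝒮} ⊕ U)), ∑ v ∈ N, G.w u v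
        ≤ ∑ _u ∈ (Yᶜ : Finset ({A // A ∈ 𝒮} ⊕ U)), 1 := by
          refine Finset.sum_le_sum fun u _ => ?_
          have h6 : ∑ v ∈ N, G.w u v ≤ ∑ v, G.w u v :=
            Finset.sum_le_sum_of_subset_of_nonneg (Finset.subset_univ N)
              (fun v _ _ => G.w_nonneg u v)
          rw [G.w_rowsum u] at h6
          exact h6
      _ = ((Yᶜ : Finset ({A // A ∈ 𝒮} ⊕ U)).card : ℝ) := by
          rw [Finset.sum_const, nsmul_eq_mul, mul_one]
  have hRn : R ≤ n := by
    rw [hRdef, hn]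
    have := Finset.card_le_card (Finset.subset_univ (Yᶜ : Finset ({A // A ∈ 𝒮} ⊕ U)))
    rw [Finset.card_univ] at this
    exact_mod_cast this
  have hFR : ∑ u ∈ Y, G.fit Y u = G.totalFit Y - R := by
    have h1 : ∑ u ∈ Y, G.fit Y u + ∑ u ∈ (Yᶜ : Finset ({A // A ∈ 𝒮} ⊕ U)), G.fit Y u
        = ∑ u, G.fit Y u := Finset.sum_add_sum_compl Y (G.fit Y)
    have h2 : ∑ u ∈ (Yᶜ : Finset ({A // A ∈ 𝒮} ⊕ U)), G.fit Y u = R := by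
      rw [Finset.sum_congr rfl
        (fun u hu => sc_fit_res 𝒮 x y G hG Y u (Finset.mem_compl.mp hu))]
      rw [Finset.sum_const, nsmul_eq_mul, mul_one]
    have h3 : ∑ u, G.fit Y u = G.totalFit Y := rfl
    rw [h2, h3] at h1
    linarith
  have hsum1 : ∑ u ∈ Y, G.fit Y u / G.totalFit Y * c^k = (G.totalFit Y - R)/G.totalFit Y * c^k := by
    rw [← Finset.sum_mul, ← Finset.sum_div, hFR]
  have hsum2 : ∑ u ∈ (Yᶜ : Finset ({A // A ∈ 𝒮} ⊕ U)),
      1 / G.totalFit Y * (c^(k+1) * (1 - ∑ v ∈ N, G.w u v))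
      = 1 / G.totalFit Y * (c^(k+1) * (R - S)) := by
    rw [← Finset.mul_sum, ← Finset.mul_sum, Finset.sum_sub_distrib,
      Finset.sum_const, nsmul_eq_mul, mul_one, ← hSdef]
  rw [hsum1, hsum2]
  -- the numeric inequality
  have hp : x / (G.totalFit Y * n) ≤ G.fit Y u₀ / G.totalFit Y * G.w u₀ v₀ := by
    rw [hn]
    exact sc_good_coef 𝒮 x y hx hy1 G hG Y A₀ e₀ hA₀Y he₀A
  have hd0 : 0 ≤ c^(k-1) - c^k := by
    rw [hck]
    nlinarith [pow_nonneg hc0.le (k-1)]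
  have hkey : c * (R * (1-c) + c * S) ≤ (1-c) * (x/n) := by
    have h1 : R * (1-c) + c * S ≤ n := by nlinarith
    calc c * (R*(1-c)+c*S) ≤ c * n := mul_le_mul_of_nonneg_left h1 hc0.le
      _ = (1-c)*(x/n) := by linarith [hid]
  have ht0 : 0 ≤ c^(k-1) := pow_nonneg hc0.le _
  have hnum : c^k * G.totalFit Y
      ≤ (G.totalFit Y - R)*c^k + c^(k+1)*(R-S) + (x/n)*(c^(k-1) - c^k) := by
    rw [hck, hck1]
    exact sc_arith c (c^(k-1)) (G.totalFit Y) R S (x/n) hkey ht0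
  calc c ^ k
      ≤ ((G.totalFit Y - R)*c^k + c^(k+1)*(R-S) + (x/n)*(c^(k-1) - c^k)) / G.totalFit Y := by
        rw [le_div_iff₀ hF0]; exact hnum
    _ = (G.totalFit Y - R)/G.totalFit Y * c^k + 1/G.totalFit Y * (c^(k+1)*(R-S))
          + x/(G.totalFit Y * n)*(c^(k-1) - c^k) := by
        rw [← div_div x (G.totalFit Y) n]
        ring
    _ ≤ _ := by
        have h7 := mul_le_mul_of_nonneg_right hp hd0
        linarith

lemma sc_step_lb [Nonempty U] (𝒮 : Finset (Finset U)) (x y : ℝ) (hx : 1 ≤ x) (hy1 : y ≤ 1)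
    (G : FitnessGraph ({A // A ∈ 𝒮} ⊕ U)) (hG : IsSetCoverGraph 𝒮 x y G)
    (Y : Finset ({A // A ∈ 𝒮} ⊕ U)) (A₀ : {A // A ∈ 𝒮}) (e₀ : U)
    (hA₀Y : Sum.inl A₀ ∈ Y) (he₀A : e₀ ∈ A₀.1) :
    (((Fintype.card ({A // A ∈ 𝒮} ⊕ U) : ℝ))^2)⁻¹ ≤ G.step Y (insert (Sum.inr e₀) Y) := by
  have hV : Nonempty ({A // A ∈ 𝒮} ⊕ U) := ⟨Sum.inr (Classical.arbitrary U)⟩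
  have hn0 := sc_n_pos (U := U) 𝒮
  have hx0 : (0:ℝ) < x := lt_of_lt_of_le one_pos hx
  have hF0 : 0 < G.totalFit Y := totalFit_pos G Y
  set nr : ℝ := ((Fintype.card ({A // A ∈ 𝒮} ⊕ U) : ℝ)) with hnr
  have hgood := sc_good_coef 𝒮 x y hx hy1 G hG Y A₀ e₀ hA₀Y he₀A
  have hstep : G.fit Y (Sum.inl A₀) / G.totalFit Y * G.w (Sum.inl A₀) (Sum.inr e₀)
      ≤ G.step Y (insert (Sum.inr e₀) Y) := by
    unfold FitnessGraph.step
    have hinner : ∀ u : ({A // A ∈ 𝒮} ⊕ U),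
        0 ≤ ∑ v, G.fit Y u / G.totalFit Y * G.w u v *
          (if moranNext Y u v = insert (Sum.inr e₀) Y then 1 else 0) := by
      intro u
      refine Finset.sum_nonneg fun v _ => mul_nonneg (coef_nonneg G Y u v) ?_
      split <;> norm_num
    have hterm : ∀ v : ({A // A ∈ 𝒮} ⊕ U),
        0 ≤ G.fit Y (Sum.inl A₀) / G.totalFit Y * G.w (Sum.inl A₀) v *
          (if moranNext Y (Sum.inl A₀) v = insert (Sum.inr e₀) Y then 1 else 0) := by
      intro v
      refine mul_nonneg (coef_nonneg G Y (Sum.inl A₀) v) ?_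
      split <;> norm_num
    have h1 : G.fit Y (Sum.inl A₀) / G.totalFit Y * G.w (Sum.inl A₀) (Sum.inr e₀) *
          (if moranNext Y (Sum.inl A₀) (Sum.inr e₀) = insert (Sum.inr e₀) Y then 1 else 0)
        ≤ ∑ v, G.fit Y (Sum.inl A₀) / G.totalFit Y * G.w (Sum.inl A₀) v *
          (if moranNext Y (Sum.inl A₀) v = insert (Sum.inr e₀) Y then 1 else 0) :=
      Finset.single_le_sum (fun v _ => hterm v) (Finset.mem_univ _)
    have h2 : (∑ v, G.fit Y (Sum.inl A₀) / G.totalFit Y * G.w (Sum.inl A₀) v *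
          (if moranNext Y (Sum.inl A₀) v = insert (Sum.inr e₀) Y then 1 else 0))
        ≤ ∑ u, ∑ v, G.fit Y u / G.totalFit Y * G.w u v *
          (if moranNext Y u v = insert (Sum.inr e₀) Y then 1 else 0) :=
      Finset.single_le_sum (fun u _ => hinner u) (Finset.mem_univ _)
    have hmn : moranNext Y (Sum.inl A₀) (Sum.inr e₀) = insert (Sum.inr e₀) Y := if_pos hA₀Y
    rw [hmn] at h1
    simp only [eq_self_iff_true, if_true, mul_one] at h1
    exact le_trans h1 h2
  refine le_trans ?_ (le_trans hgood hstep)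
  -- (nr^2)⁻¹ ≤ x / (F * nr)
  have hFle : G.totalFit Y ≤ nr * x := sc_totalFit_le 𝒮 x y hx hy1 G hG Y
  have heq : (nr^2)⁻¹ = x / (x * nr^2) := by field_simp
  rw [heq]
  have hden0 : 0 < G.totalFit Y * nr := by positivity
  have h8 : G.totalFit Y * nr ≤ x * nr^2 := by nlinarith [hn0]
  have h9 := mul_le_mul_of_nonneg_left h8 hx0.le
  rw [div_le_div_iff₀ (by positivity) hden0]
  nlinarith [h9]

/-- the absorption estimate: from a configuration containing `N`, the process is absorbed
in `A` within `k` steps with probability at least `n⁻²ᵏ`. -/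
lemma sc_absorb [Nonempty U] (𝒮 : Finset (Finset U)) (x y : ℝ) (hx : 1 ≤ x) (hy1 : y ≤ 1)
    (G : FitnessGraph ({A // A ∈ 𝒮} ⊕ U)) (hG : IsSetCoverGraph 𝒮 x y G)
    (N : Finset ({A // A ∈ 𝒮} ⊕ U))
    (hNcov : ∀ e : U, ∃ A₀ : {A // A ∈ 𝒮}, Sum.inl A₀ ∈ N ∧ e ∈ A₀.1)
    (A : Set (Finset ({A // A ∈ 𝒮} ⊕ U)))
    (hmemA : ∀ Z, Z ∈ A ↔ ((∀ e : U, Sum.inr e ∈ Z) ∧ N ⊆ Z)) :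
    ∀ (k : ℕ) (Y : Finset ({A // A ∈ 𝒮} ⊕ U)), N ⊆ Y → scMiss 𝒮 Y ≤ k →
      ((((Fintype.card ({A // A ∈ 𝒮} ⊕ U) : ℝ))^2)⁻¹)^k ≤ absMass G A k Y := by
  have hV : Nonempty ({A // A ∈ 𝒮} ⊕ U) := ⟨Sum.inr (Classical.arbitrary U)⟩
  have hn0 := sc_n_pos (U := U) 𝒮
  have hn1 : (1:ℝ) ≤ ((Fintype.card ({A // A ∈ 𝒮} ⊕ U) : ℝ)) := by
    have : 0 < Fintype.card ({A // A ∈ 𝒮} ⊕ U) := by exact_mod_cast hn0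
    exact_mod_cast this
  set nr : ℝ := ((Fintype.card ({A // A ∈ 𝒮} ⊕ U) : ℝ)) with hnr
  have hinv1 : (nr^2)⁻¹ ≤ 1 := by
    rw [inv_le_one_iff₀]
    right; nlinarith
  have hinv0 : 0 ≤ (nr^2)⁻¹ := by positivity
  intro k
  induction k with
  | zero =>
    intro Y hNY hmiss
    have hYA : Y ∈ A := by
      rw [hmemA]
      refine ⟨fun e => ?_, hNY⟩
      by_contra he
      have : 1 ≤ scMiss 𝒮 Y := scMiss_pos 𝒮 Y e he
      omega
    rw [absMass_of_mem G A 0 hYA]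
    norm_num
  | succ k ih =>
    intro Y hNY hmiss
    by_cases hmiss0 : scMiss 𝒮 Y = 0
    · have hYA : Y ∈ A := by
        rw [hmemA]
        refine ⟨fun e => ?_, hNY⟩
        by_contra he
        have : 1 ≤ scMiss 𝒮 Y := scMiss_pos 𝒮 Y e he
        omega
      rw [absMass_of_mem G A (k+1) hYA]
      exact pow_le_one₀ hinv0 hinv1
    · -- there is a missing element
      have : ∃ e₀ : U, Sum.inr e₀ ∉ Y := by
        by_contra h
        push_neg at h
        apply hmiss0
        unfold scMiss
        rw [Finset.card_eq_zero, Finset.filter_eq_empty_iff]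
        intro e _
        simp only [not_not]
        exact h e
      obtain ⟨e₀, he₀⟩ := this
      obtain ⟨A₀, hA₀N, he₀A⟩ := hNcov e₀
      have hA₀Y : Sum.inl A₀ ∈ Y := hNY hA₀N
      have hYA : Y ∉ A := by
        rw [hmemA]
        rintro ⟨h1, -⟩
        exact he₀ (h1 e₀)
      set Y' := insert (Sum.inr e₀) Y with hY'
      have hNY' : N ⊆ Y' := hNY.trans (Finset.subset_insert _ Y)
      have hmiss' : scMiss 𝒮 Y' ≤ k := by
        have h9 := scMiss_insert_lt 𝒮 Y e₀ he₀
        rw [hY']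
        omega
      have hIH := ih Y' hNY' hmiss'
      have e1 : k + 1 = 1 + k := by omega
      have habs : absMass G A (k+1) Y = ∑ Z, stopStep G A Y Z * absMass G A k Z := by
        rw [e1, absMass_front]
      rw [habs]
      have hlb : stopStep G A Y Y' * absMass G A k Y'
          ≤ ∑ Z, stopStep G A Y Z * absMass G A k Z :=
        Finset.single_le_sum (fun Z _ =>
          mul_nonneg (stopStep_nonneg G A Y Z) (absMass_nonneg G A k Z)) (Finset.mem_univ Y')
      refine le_trans ?_ hlb
      have hss : stopStep G A Y Y' = G.step Y Y' := if_neg hYA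
      rw [hss, pow_succ (((nr:ℝ)^2)⁻¹) k, mul_comm (((nr:ℝ)^2)⁻¹^k) (((nr:ℝ)^2)⁻¹)]
      exact mul_le_mul (sc_step_lb 𝒮 x y hx hy1 G hG Y A₀ e₀ hA₀Y he₀A) hIH
        (pow_nonneg hinv0 k) (step_nonneg G Y Y')

end SetCoverMain

set_option maxHeartbeats 1000000 in
/-- From any configuration `X` whose mutant set-nodes cover `V₂`, the process reaches a
configuration `X*` with `V₂ ∪ (X ∩ V₁) ⊆ X*` with probability at least
`((x/n)/((x/n)+n))^{|V₂|}`. -/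
theorem reach_all_elements_mutant {U : Type} [Fintype U] [DecidableEq U] [Nonempty U]
    (𝒮 : Finset (Finset U)) (hne : ∀ A ∈ 𝒮, A.Nonempty) (hcov : ∀ e : U, ∃ A ∈ 𝒮, e ∈ A)
    (x y : ℝ) (hx : 1 ≤ x) (hy0 : 0 < y) (hy1 : y ≤ 1)
    (G : FitnessGraph ({A // A ∈ 𝒮} ⊕ U)) (hG : IsSetCoverGraph 𝒮 x y G)
    (X : Finset ({A // A ∈ 𝒮} ⊕ U))
    (hXcov : ∀ e : U, ∃ A : {A // A ∈ 𝒮}, Sum.inl A ∈ X ∧ e ∈ A.1) :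
    ((x / (Fintype.card ({A // A ∈ 𝒮} ⊕ U) : ℝ)) /
        (x / (Fintype.card ({A // A ∈ 𝒮} ⊕ U) : ℝ) +
          (Fintype.card ({A // A ∈ 𝒮} ⊕ U) : ℝ))) ^ (Fintype.card U) ≤
      reachProb G
        {Xstar | (∀ e : U, Sum.inr e ∈ Xstar) ∧
          ∀ A : {A // A ∈ 𝒮}, Sum.inl A ∈ X → Sum.inl A ∈ Xstar} X := by
  classical
  have hV : Nonempty ({A // A ∈ 𝒮} ⊕ U) := ⟨Sum.inr (Classical.arbitrary U)⟩
  set n : ℝ := (Fintype.card ({A // A ∈ 𝒮} ⊕ U) : ℝ) with hn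
  set c : ℝ := x / n / (x / n + n) with hc
  set A : Set (Finset ({A // A ∈ 𝒮} ⊕ U)) :=
    {Xstar | (∀ e : U, Sum.inr e ∈ Xstar) ∧
      ∀ A : {A // A ∈ 𝒮}, Sum.inl A ∈ X → Sum.inl A ∈ Xstar} with hA
  set N : Finset ({A // A ∈ 𝒮} ⊕ U) := X.filter (fun u => u.isLeft) with hNdef
  have hNX : N ⊆ X := Finset.filter_subset _ _
  have hNcov : ∀ e : U, ∃ A₀ : {A // A ∈ 𝒮}, Sum.inl A₀ ∈ N ∧ e ∈ A₀.1 := by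
    intro e
    obtain ⟨A₀, h1, h2⟩ := hXcov e
    exact ⟨A₀, Finset.mem_filter.mpr ⟨h1, rfl⟩, h2⟩
  have hmemA : ∀ Z, Z ∈ A ↔ ((∀ e : U, Sum.inr e ∈ Z) ∧ N ⊆ Z) := by
    intro Z
    constructor
    · rintro ⟨h1, h2⟩
      refine ⟨h1, fun u hu => ?_⟩
      obtain ⟨huX, hul⟩ := Finset.mem_filter.mp hu
      cases u with
      | inl a => exact h2 a huX
      | inr e => simp at hul
    · rintro ⟨h1, h2⟩
      exact ⟨h1, fun a ha => h2 (Finset.mem_filter.mpr ⟨ha, rfl⟩)⟩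
  have hn0 : (0:ℝ) < n := sc_n_pos (U := U) 𝒮
  have hx0 : (0:ℝ) < x := lt_of_lt_of_le one_pos hx
  have hc0 : 0 < c := by rw [hc]; positivity
  have hc1 : c < 1 := by
    rw [hc, div_lt_one (by positivity)]
    have : 0 < x / n := by positivity
    linarith
  set φ : Finset ({A // A ∈ 𝒮} ⊕ U) → ℝ := scPhi 𝒮 c N with hφ
  -- one-step subharmonicity of φ for the stopped chain
  have hsub : ∀ Y, φ Y ≤ ∑ Z, stopStep G A Y Z * φ Z := by
    intro Y
    by_cases hYA : Y ∈ A
    · have hid : ∀ Z, stopStep G A Y Z = if Z = Y then 1 else 0 := fun Z => if_pos hYA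
      refine le_of_eq ?_
      symm
      rw [Finset.sum_congr rfl fun Z (_ : Z ∈ Finset.univ) => by
        rw [hid Z, ite_mul, one_mul, zero_mul]]
      rw [Finset.sum_ite_eq' Finset.univ Y φ]
      simp
    · have hid : ∀ Z, stopStep G A Y Z = G.step Y Z := fun Z => if_neg hYA
      rw [Finset.sum_congr rfl fun Z (_ : Z ∈ Finset.univ) => by rw [hid Z]]
      by_cases hNY : N ⊆ Y
      · have hmissing : ∃ e₀ : U, Sum.inr e₀ ∉ Y := by
          by_contra h
          push_neg at h
          exact hYA ((hmemA Y).mpr ⟨h, hNY⟩)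
        obtain ⟨e₀, he₀⟩ := hmissing
        obtain ⟨A₀, hA₀N, he₀A⟩ := hNcov e₀
        have hrace := sc_race 𝒮 x y hx hy1 G hG N Y hNY A₀ e₀ hA₀N he₀A he₀ n c hn hc
        have hφY : φ Y = c ^ scMiss 𝒮 Y := if_pos hNY
        rw [hφY]
        exact hrace
      · have hφY : φ Y = 0 := if_neg hNY
        rw [hφY]
        exact Finset.sum_nonneg fun Z _ =>
          mul_nonneg (step_nonneg G Y Z) (scPhi_nonneg 𝒮 hc0.le N Z)
  -- the difference between φ and the reach probability is nonpositive
  have hunine : (Finset.univ : Finset (Finset ({A // A ∈ 𝒮} ⊕ U))).Nonempty :=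
    Finset.univ_nonempty
  set D : ℝ := Finset.univ.sup' hunine (fun Y => φ Y - reachProb G A Y) with hD
  have hDle : ∀ Y, φ Y - reachProb G A Y ≤ D := fun Y =>
    Finset.le_sup' (fun Y => φ Y - reachProb G A Y) (Finset.mem_univ Y)
  have hD0 : D ≤ 0 := by
    by_contra hD'
    push_neg at hD'
    obtain ⟨Ys, -, hYs⟩ := Finset.exists_mem_eq_sup' hunine (fun Y => φ Y - reachProb G A Y)
    rw [← hD] at hYs
    have hgYs : 0 ≤ reachProb G A Ys := reachProb_nonneg G A Ys
    have hφYs : 0 < φ Ys := by rw [hYs] at hD'; linarith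
    have hNYs : N ⊆ Ys := by
      by_contra h
      rw [show φ Ys = 0 from if_neg h] at hφYs
      exact lt_irrefl 0 hφYs
    have hYsA : Ys ∉ A := by
      intro h
      have h1 := reachProb_of_mem G A h
      have h2 := scPhi_le_one 𝒮 hc0.le hc1.le N Ys
      rw [hYs, h1] at hD'
      have h3 : φ Ys ≤ 1 := h2
      linarith
    set m := Fintype.card U with hm
    set ε : ℝ := ((n^2)⁻¹)^m with hε
    have hε0 : 0 < ε := by rw [hε]; positivity
    have hmass : ε ≤ absMass G A m Ys :=
      sc_absorb 𝒮 x y hx hy1 G hG N hNcov A hmemA m Ys hNYs (scMiss_le_card 𝒮 Ys)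
    have h1 := subharmonic_iter G A φ hsub m Ys
    have h2 := reachProb_superharmonic G A m Ys
    have h3 : D ≤ ∑ Z, stopStepN G A m Ys Z * (φ Z - reachProb G A Z) := by
      rw [hYs]
      calc φ Ys - reachProb G A Ys
          ≤ (∑ Z, stopStepN G A m Ys Z * φ Z)
            - (∑ Z, stopStepN G A m Ys Z * reachProb G A Z) := sub_le_sub h1 h2
        _ = ∑ Z, stopStepN G A m Ys Z * (φ Z - reachProb G A Z) := by
            rw [← Finset.sum_sub_distrib]
            exact Finset.sum_congr rfl fun Z _ => (mul_sub _ _ _).symm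
    have h4 : ∀ Z, stopStepN G A m Ys Z * (φ Z - reachProb G A Z)
        ≤ stopStepN G A m Ys Z * (if Z ∉ A ∧ N ⊆ Z then D else 0) := by
      intro Z
      refine mul_le_mul_of_nonneg_left ?_ (stopStepN_nonneg G A m Ys Z)
      by_cases hZA : Z ∈ A
      · rw [if_neg (by tauto)]
        have ha := reachProb_of_mem G A hZA
        have hb : φ Z ≤ 1 := scPhi_le_one 𝒮 hc0.le hc1.le N Z
        rw [ha]
        linarith
      · by_cases hNZ : N ⊆ Z
        · rw [if_pos ⟨hZA, hNZ⟩]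
          exact hDle Z
        · rw [if_neg (by tauto), show φ Z = 0 from if_neg hNZ]
          have := reachProb_nonneg G A Z
          linarith
    have h5 : ∑ Z, stopStepN G A m Ys Z * (if Z ∉ A ∧ N ⊆ Z then D else 0)
        = (∑ Z, (if Z ∉ A ∧ N ⊆ Z then stopStepN G A m Ys Z else 0)) * D := by
      rw [Finset.sum_mul]
      refine Finset.sum_congr rfl fun Z _ => ?_
      by_cases hZ : Z ∉ A ∧ N ⊆ Z
      · rw [if_pos hZ, if_pos hZ]
      · rw [if_neg hZ, if_neg hZ, mul_zero, zero_mul]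
    have habsi : absMass G A m Ys = ∑ Z, (if Z ∈ A then stopStepN G A m Ys Z else 0) := by
      unfold absMass
      rw [Finset.sum_filter]
      refine Finset.sum_congr rfl fun Z _ => ?_
      by_cases hZ : Z ∈ A
      · rw [if_pos hZ, if_pos hZ]
      · rw [if_neg hZ, if_neg hZ]
    have h6 : (∑ Z, (if Z ∉ A ∧ N ⊆ Z then stopStepN G A m Ys Z else 0))
        + absMass G A m Ys ≤ 1 := by
      rw [habsi, ← Finset.sum_add_distrib, ← stopStepN_rowsum G A m Ys]
      refine Finset.sum_le_sum fun Z _ => ?_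
      by_cases hZA : Z ∈ A
      · rw [if_neg (by tauto), if_pos hZA, zero_add]
      · rw [if_neg hZA, add_zero]
        split
        · exact le_refl _
        · exact stopStepN_nonneg G A m Ys Z
    have h7 : (∑ Z, (if Z ∉ A ∧ N ⊆ Z then stopStepN G A m Ys Z else 0)) ≤ 1 - ε := by
      linarith
    have h8 : D ≤ (1 - ε) * D := by
      calc D ≤ ∑ Z, stopStepN G A m Ys Z * (φ Z - reachProb G A Z) := h3
        _ ≤ ∑ Z, stopStepN G A m Ys Z * (if Z ∉ A ∧ N ⊆ Z then D else 0) :=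
            Finset.sum_le_sum fun Z _ => h4 Z
        _ = (∑ Z, (if Z ∉ A ∧ N ⊆ Z then stopStepN G A m Ys Z else 0)) * D := h5
        _ ≤ (1 - ε) * D := mul_le_mul_of_nonneg_right h7 hD'.le
    nlinarith [h8, hε0, hD']
  -- conclude
  have hφX : c ^ (Fintype.card U) ≤ φ X := by
    rw [show φ X = c ^ scMiss 𝒮 X from if_pos hNX]
    exact pow_le_pow_of_le_one hc0.le hc1.le (scMiss_le_card 𝒮 X)
  have hfin := hDle X
  calc c ^ Fintype.card U ≤ φ X := hφX
    _ ≤ reachProb G A X := by linarith
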